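/- Let A_1, …, A_k be pairwise commuting N×N matrices with nonnegative integer entries and no zero rows which form an irreducible family, and let ρ_i be the spectral radius of A_i. If ρ_1⋯ρ_k > 1, then the infinite path space X_B of the stationary k-Bratteli diagram B of (A_1,…,A_k) is a Cantor set: X_B is nonempty, compact, Hausdorff, totally disconnected, metrizable, and has no isolated points. -/

import Mathlib

open scoped Classical ENNReal Topology
open TopologicalSpace MeasureTheory Filter Set
open Fin.NatCast

namespace KBratteli

variable (k N : ℕ) [NeZero k] (A : Fin k → Matrix (Fin N) (Fin N) ℕ)

/-- An edge at level `n` of the stationary `k`-Bratteli diagram of the matrices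
`A 0, …, A (k-1)`: an element of `Edge k N A n` is an edge whose source lies in the
level-`(n+1)` vertex set and whose range lies in the level-`n` vertex set (both copies of
`Fin N`); there are exactly `A (n % k) p q` edges with range `p` and source `q`. -/
structure Edge (n : ℕ) : Type where
  rg : Fin N
  src : Fin N
  idx : Fin (A (n : Fin k) rg src)

/-- The infinite path space `X_B` of the stationary `k`-Bratteli diagram of `A`. -/
def PathSpace : Type :=
  { x : (n : ℕ) → Edge k N A n // ∀ n, (x n).src = (x (n + 1)).rg }

/-- A finite path of length `ℓ` beginning at level `0`: a composable string of edges,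
together with the vertices it visits.  Length-`0` paths are vertices of `V₀`. -/
structure FinPath (ℓ : ℕ) : Type where
  vtx : Fin (ℓ + 1) → Fin N
  edge : (i : Fin ℓ) → Edge k N A i
  rg_eq : ∀ i : Fin ℓ, (edge i).rg = vtx i.castSucc
  src_eq : ∀ i : Fin ℓ, (edge i).src = vtx i.succ

/-- `FB`: the set of all finite paths (of all lengths) beginning at level `0`. -/
abbrev FB : Type := Σ ℓ : ℕ, FinPath k N A ℓ

variable {k N A}

/-- The source (final) vertex of a finite path. -/
def FinPath.src {ℓ : ℕ} (lam : FinPath k N A ℓ) : Fin N := lam.vtx (Fin.last ℓ)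

/-- The range (initial, level-0) vertex of a finite path. -/
def FinPath.rg {ℓ : ℕ} (lam : FinPath k N A ℓ) : Fin N := lam.vtx 0

/-- The length-0 finite path at the level-0 vertex `v`. -/
def vertexPath (v : Fin N) : FinPath k N A 0 where
  vtx := fun _ => v
  edge := fun i => i.elim0
  rg_eq := fun i => i.elim0
  src_eq := fun i => i.elim0

/-- The cylinder set `[λ]` of a finite path `λ`: all infinite paths with initial
segment `λ`. -/
def Cyl {ℓ : ℕ} (lam : FinPath k N A ℓ) : Set (PathSpace k N A) :=
  { x | (x.1 0).rg = lam.rg ∧ ∀ i : Fin ℓ, x.1 i = lam.edge i }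

variable (k N A) in
/-- The collection of all cylinder sets. -/
def cylinderSets : Set (Set (PathSpace k N A)) :=
  { S | ∃ (ℓ : ℕ) (lam : FinPath k N A ℓ), S = Cyl lam }

/-- The cylinder-set topology on the infinite path space. -/
instance : TopologicalSpace (PathSpace k N A) :=
  generateFrom (cylinderSets k N A)

/-- The Borel σ-algebra of the cylinder-set topology. -/
instance : MeasurableSpace (PathSpace k N A) := borel _

instance : BorelSpace (PathSpace k N A) := ⟨rfl⟩

lemma isOpen_cyl {ℓ : ℕ} (lam : FinPath k N A ℓ) : IsOpen (Cyl lam) :=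
  isOpen_generateFrom_of_mem ⟨ℓ, lam, rfl⟩

lemma measurableSet_cyl {ℓ : ℕ} (lam : FinPath k N A ℓ) : MeasurableSet (Cyl lam) :=
  (isOpen_cyl lam).measurableSet

/-- Edges form a finite type. -/
def edgeEquiv (n : ℕ) : Edge k N A n ≃ Σ p : Fin N, Σ q : Fin N, Fin (A (n : Fin k) p q) where
  toFun e := ⟨e.rg, e.src, e.idx⟩
  invFun t := ⟨t.1, t.2.1, t.2.2⟩
  left_inv e := rfl
  right_inv t := rfl

instance (n : ℕ) : Finite (Edge k N A n) := by
  have : ∀ p : Fin N, Finite (Σ q : Fin N, Fin (A (n : Fin k) p q)) := fun _ => inferInstance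
  exact Finite.of_equiv _ (edgeEquiv n).symm

instance (ℓ : ℕ) : Finite (FinPath k N A ℓ) := by
  have hinj : Function.Injective
      (fun lam : FinPath k N A ℓ => (lam.vtx, lam.edge)) := by
    rintro ⟨v, e, h1, h2⟩ ⟨v', e', h1', h2'⟩ h
    simp only [Prod.mk.injEq] at h
    obtain ⟨hv, he⟩ := h
    subst hv; subst he; rfl
  exact Finite.of_injective _ hinj

instance : Countable (FB k N A) := by infer_instance

/-- The initial segment of length `m` of an infinite path. -/
def prefixPath (x : PathSpace k N A) (m : ℕ) : FinPath k N A m where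
  vtx := fun i => (x.1 i).rg
  edge := fun i => x.1 i
  rg_eq := fun _ => rfl
  src_eq := fun i => x.2 i

lemma mem_cyl_prefixPath (x : PathSpace k N A) (m : ℕ) : x ∈ Cyl (prefixPath x m) :=
  ⟨rfl, fun _ => rfl⟩

lemma measurableSet_coord (j : ℕ) (P : Edge k N A j → Prop) :
    MeasurableSet { x : PathSpace k N A | P (x.1 j) } := by
  have h : { x : PathSpace k N A | P (x.1 j) }
      = ⋃ (lam : FinPath k N A (j + 1)) (_ : P (lam.edge (Fin.last j))), Cyl lam := by
    ext x
    simp only [Set.mem_setOf_eq, Set.mem_iUnion]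
    constructor
    · intro hx
      exact ⟨prefixPath x (j + 1), hx, mem_cyl_prefixPath x (j + 1)⟩
    · rintro ⟨lam, hP, -, hedge⟩
      have hx : x.1 j = lam.edge (Fin.last j) := hedge (Fin.last j)
      rw [hx]; exact hP
  rw [h]
  exact MeasurableSet.iUnion fun lam => MeasurableSet.iUnion fun _ => measurableSet_cyl lam

/-- The first level at which two infinite paths differ. -/
noncomputable def firstDiff (x y : PathSpace k N A) : ℕ := sInf { n | x.1 n ≠ y.1 n }

/-- The function `d_w` associated to a weight-type function `w` on finite paths:
`d_w(x,x) = 0`; `d_w(x,y) = 1` if `x` and `y` have no common initial sub-path (i.e. they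
do not even start at the same level-0 vertex); and otherwise `d_w(x,y) = w(x ∧ y)`, the
value of `w` on the longest common initial sub-path of `x` and `y`. -/
noncomputable def distW (w : FB k N A → ℝ) (x y : PathSpace k N A) : ℝ :=
  if x = y then 0
  else if (x.1 0).rg = (y.1 0).rg then w ⟨firstDiff x y, prefixPath x (firstDiff x y)⟩
  else 1

/-- `η` is an (initial) sub-path of `λ`. -/
def IsSubPath {m ℓ : ℕ} (η : FinPath k N A m) (lam : FinPath k N A ℓ) : Prop :=
  ∃ h : m ≤ ℓ, η.rg = lam.rg ∧ ∀ i : Fin m, η.edge i = lam.edge (Fin.castLE h i)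

/-- `lam ∈ F_γ B` : the finite path `lam` extends `γ`. -/
def Extends {m : ℕ} (γ : FinPath k N A m) (lam : FB k N A) : Prop :=
  IsSubPath γ lam.2

/-- The spectral radius of a matrix of nonnegative integers, as a real number. -/
noncomputable def specRad {N : ℕ} (M : Matrix (Fin N) (Fin N) ℕ) : ℝ :=
  (spectralRadius ℂ (M.map (Nat.cast : ℕ → ℂ))).toReal

/-- The weight `w_δ` on the stationary `k`-Bratteli diagram of `A`, relative to data
`ρ : Fin k → ℝ` (the spectral radii) and `xv : Fin N → ℝ` (the Perron–Frobenius
eigenvector): on a path `η` of length `q·k + t` (`0 ≤ t ≤ k-1`) it is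
`(ρ₁^{q+1} ⋯ ρ_t^{q+1} · ρ_{t+1}^q ⋯ ρ_k^q)^{-1/δ} · xv (s η)`. -/
noncomputable def wt (δ : ℝ) (ρ : Fin k → ℝ) (xv : Fin N → ℝ) (lam : FB k N A) : ℝ :=
  (∏ i : Fin k, ρ i ^ (if (i : ℕ) < lam.1 % k then lam.1 / k + 1 else lam.1 / k))
      ^ (-(1 / δ)) * xv lam.2.src

/-- The value `M([λ]) = (ρ₁⋯ρ_t)^{-(q+1)} (ρ_{t+1}⋯ρ_k)^{-q} · x_{s(λ)}` of the
measure `M` on the cylinder set of a path of length `q·k + t`. -/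
noncomputable def Mval (ρ : Fin k → ℝ) (xv : Fin N → ℝ) (lam : FB k N A) : ℝ :=
  (∏ i : Fin k, ρ i ^ (if (i : ℕ) < lam.1 % k then lam.1 / k + 1 else lam.1 / k))⁻¹
    * xv lam.2.src

/-- A family of matrices is irreducible if for every pair of indices some finite product
of matrices from the family has positive corresponding entry. -/
def IrreducibleFamily {k N : ℕ} (A : Fin k → Matrix (Fin N) (Fin N) ℕ) : Prop :=
  ∀ a b : Fin N, ∃ l : List (Fin k), 0 < (l.map A).prod a b

/-- A single square matrix with nonnegative integer entries is irreducible if for every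
pair of indices some positive power has positive corresponding entry. -/
def MatIrreducible {N : ℕ} (B : Matrix (Fin N) (Fin N) ℕ) : Prop :=
  ∀ a b : Fin N, ∃ m : ℕ, 0 < m ∧ 0 < (B ^ m) a b

/-- The diameter (in `ℝ≥0∞`) of a set of infinite paths relative to `d_w`. -/
noncomputable def diamW (w : FB k N A → ℝ) (U : Set (PathSpace k N A)) : ℝ≥0∞ :=
  ⨆ (x) (_ : x ∈ U) (y) (_ : y ∈ U), ENNReal.ofReal (distW w x y)

/-- The `t`-dimensional Hausdorff (outer) measure of a set `Z` relative to the metric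
`d_w`: `H^t(Z) = lim_{ε → 0} inf { Σᵢ (diam Uᵢ)^t : Z ⊆ ⋃ᵢ Uᵢ, diam Uᵢ < ε }`. -/
noncomputable def hausW (w : FB k N A → ℝ) (t : ℝ) (Z : Set (PathSpace k N A)) : ℝ≥0∞ :=
  ⨆ (ε : ℝ≥0∞) (_ : 0 < ε),
    ⨅ (U : ℕ → Set (PathSpace k N A)) (_ : Z ⊆ ⋃ n, U n)
      (_ : ∀ n, diamW w (U n) < ε), ∑' n, diamW w (U n) ^ t

lemma natCast_mul_add (n i : ℕ) : ((n * k + i : ℕ) : Fin k) = (i : Fin k) := by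
  push_cast
  simp [Fin.natCast_self]

/-- Transport of edges between levels governed by the same matrix (the diagram is
stationary with period `k`). -/
def Edge.cast {i j : ℕ} (h : (i : Fin k) = (j : Fin k)) (e : Edge k N A i) :
    Edge k N A j where
  rg := e.rg
  src := e.src
  idx := Fin.cast (by rw [h]) e.idx

/-- The cylinder set `[γ e]` of a finite path `γ` (of length `m`) extended by one
further edge `e` at level `m`. -/
def cylExt {m : ℕ} (γ : FinPath k N A m) (e : Edge k N A m) : Set (PathSpace k N A) :=
  Cyl γ ∩ { x | x.1 m = e }

lemma measurableSet_cylExt {m : ℕ} (γ : FinPath k N A m) (e : Edge k N A m) :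
    MeasurableSet (cylExt γ e) :=
  (measurableSet_cyl γ).inter (measurableSet_coord m fun f => f = e)

/-- The cylinder set `[λ μ]` of the concatenation of `λ ∈ F^{nk}B` with `μ ∈ F^{k}B`
(the diagram being stationary of period `k`, `μ` concatenates onto `λ`). -/
def cylCat {n : ℕ} (lam : FinPath k N A (n * k)) (η : FinPath k N A k) :
    Set (PathSpace k N A) :=
  Cyl lam ∩ { x | (x.1 (n * k)).rg = η.rg } ∩
    ⋂ i : Fin k,
      { x | x.1 (n * k + (i : ℕ)) = Edge.cast (natCast_mul_add n (i : ℕ)).symm (η.edge i) }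

lemma measurableSet_cylCat {n : ℕ} (lam : FinPath k N A (n * k)) (η : FinPath k N A k) :
    MeasurableSet (cylCat lam η) :=
  ((measurableSet_cyl lam).inter
      (measurableSet_coord (n * k) (fun e => e.rg = η.rg))).inter
    (MeasurableSet.iInter fun i => measurableSet_coord (n * k + (i : ℕ))
      (fun e => e = Edge.cast (natCast_mul_add n (i : ℕ)).symm (η.edge i)))



end KBratteli



namespace KBratteli

/-! ### Auxiliary material -/

section Aux

variable {k N : ℕ} [NeZero k] {A : Fin k → Matrix (Fin N) (Fin N) ℕ}

instance (n : ℕ) : TopologicalSpace (Edge k N A n) := ⊥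
instance (n : ℕ) : DiscreteTopology (Edge k N A n) := ⟨rfl⟩

lemma isOpen_coord (j : ℕ) (P : Edge k N A j → Prop) :
    IsOpen { x : PathSpace k N A | P (x.1 j) } := by
  have h : { x : PathSpace k N A | P (x.1 j) }
      = ⋃ (lam : FinPath k N A (j + 1)) (_ : P (lam.edge (Fin.last j))), Cyl lam := by
    ext x
    simp only [Set.mem_setOf_eq, Set.mem_iUnion]
    constructor
    · intro hx
      exact ⟨prefixPath x (j + 1), hx, mem_cyl_prefixPath x (j + 1)⟩
    · rintro ⟨lam, hP, -, hedge⟩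
      have hx : x.1 j = lam.edge (Fin.last j) := hedge (Fin.last j)
      rw [hx]; exact hP
  rw [h]
  exact isOpen_iUnion fun lam => isOpen_iUnion fun _ => isOpen_cyl lam

variable (k N A) in
/-- The underlying edge sequence of an infinite path. -/
def toSeq (x : PathSpace k N A) : ∀ n, Edge k N A n := x.1

lemma toSeq_injective : Function.Injective (toSeq k N A) := fun _ _ h => Subtype.ext h

lemma continuous_toSeq : Continuous (toSeq k N A) := by
  refine continuous_pi fun j => ?_
  rw [continuous_discrete_rng]
  intro e
  exact isOpen_coord j (· = e)

lemma inducing_val : Topology.IsInducing (toSeq k N A) := by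
  constructor
  refine le_antisymm (continuous_iff_le_induced.1 continuous_toSeq) ?_
  refine le_generateFrom ?_
  rintro S ⟨ℓ, lam, rfl⟩
  have hopen : IsOpen { f : ∀ n, Edge k N A n |
      (f 0).rg = lam.rg ∧ ∀ i : Fin ℓ, f i = lam.edge i } := by
    have h : { f : ∀ n, Edge k N A n | (f 0).rg = lam.rg ∧ ∀ i : Fin ℓ, f i = lam.edge i }
        = { f : ∀ n, Edge k N A n | (f 0).rg = lam.rg } ∩
          ⋂ i : Fin ℓ, { f : ∀ n, Edge k N A n | f i = lam.edge i } := by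
      ext f; simp [Set.mem_iInter]
    rw [h]
    refine IsOpen.inter ?_ (isOpen_iInter_of_finite fun i => ?_)
    · show IsOpen ((fun f : ∀ n, Edge k N A n => f 0) ⁻¹' { e | e.rg = lam.rg })
      exact (isOpen_discrete _).preimage (continuous_apply 0)
    · show IsOpen ((fun f : ∀ n, Edge k N A n => f i) ⁻¹' {lam.edge i})
      exact (isOpen_discrete _).preimage (continuous_apply _)
  exact isOpen_induced_iff.mpr ⟨_, hopen, rfl⟩

lemma embedding_val : Topology.IsEmbedding (toSeq k N A) :=
  ⟨inducing_val, toSeq_injective⟩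

lemma isClosed_range_val :
    IsClosed (Set.range (toSeq k N A)) := by
  have h : Set.range (toSeq k N A)
      = ⋂ n : ℕ, { f : ∀ n, Edge k N A n | (f n).src = (f (n + 1)).rg } := by
    ext f
    simp only [Set.mem_iInter, Set.mem_setOf_eq, Set.mem_range]
    exact ⟨fun ⟨x, hx⟩ n => hx ▸ x.2 n, fun h => ⟨⟨f, h⟩, rfl⟩⟩
  rw [h]
  refine isClosed_iInter fun n => ?_
  have : { f : ∀ n, Edge k N A n | (f n).src = (f (n + 1)).rg }
      = (fun f : ∀ n, Edge k N A n => (f n, f (n + 1))) ⁻¹'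
        { p : Edge k N A n × Edge k N A (n + 1) | p.1.src = p.2.rg } := rfl
  rw [this]
  exact (isClosed_discrete _).preimage ((continuous_apply n).prodMk (continuous_apply (n + 1)))

lemma pathSpace_compactSpace : CompactSpace (PathSpace k N A) := by
  constructor
  rw [embedding_val.isCompact_iff]
  rw [Set.image_univ]
  exact isClosed_range_val.isCompact

lemma pathSpace_t2Space : T2Space (PathSpace k N A) :=
  embedding_val.t2Space

lemma pathSpace_totallyDisconnected : TotallyDisconnectedSpace (PathSpace k N A) := by
  rw [← embedding_val.isTotallyDisconnected_range]
  exact isTotallyDisconnected_of_totallyDisconnectedSpace _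

lemma pathSpace_metrizable : TopologicalSpace.MetrizableSpace (PathSpace k N A) := by
  haveI : TopologicalSpace.MetrizableSpace (∀ n, Edge k N A n) := by
    letI : MetricSpace (∀ n, Edge k N A n) := PiNat.metricSpace
    infer_instance
  exact embedding_val.metrizableSpace

section Walk

variable (hrow : ∀ (i : Fin k) (a : Fin N), ∃ b, 0 < A i a b)

/-- A vertex sequence obtained by always following some edge (possible since no matrix
has a zero row), starting from vertex `a` at level `n0`. -/
noncomputable def walkV (n0 : ℕ) (a : Fin N) : ℕ → Fin N
  | 0 => a
  | j + 1 => (hrow ((n0 + j : ℕ) : Fin k) (walkV n0 a j)).choose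

lemma walkV_pos (n0 : ℕ) (a : Fin N) (j : ℕ) :
    0 < A ((n0 + j : ℕ) : Fin k) (walkV hrow n0 a j) (walkV hrow n0 a (j + 1)) :=
  (hrow ((n0 + j : ℕ) : Fin k) (walkV hrow n0 a j)).choose_spec

/-- The edge at level `j ≥ n0` of the walk starting at vertex `a` at level `n0`. -/
noncomputable def brEdge (n0 : ℕ) (a : Fin N) (j : ℕ) (h : n0 ≤ j) : Edge k N A j where
  rg := walkV hrow n0 a (j - n0)
  src := walkV hrow n0 a (j - n0 + 1)
  idx := ⟨0, by
    have h2 := walkV_pos hrow n0 a (j - n0)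
    rwa [Nat.add_sub_cancel' h] at h2⟩

include hrow in
lemma pathSpace_nonempty (a : Fin N) : Nonempty (PathSpace k N A) := by
  refine ⟨⟨fun j => brEdge hrow 0 a j (Nat.zero_le j), fun j => ?_⟩⟩
  show walkV hrow 0 a (j - 0 + 1) = walkV hrow 0 a (j + 1 - 0)
  simp

/-- The edge sequence which follows `x` up to level `n`, takes edge `e` at level `n`, and
then continues arbitrarily. -/
noncomputable def brFun (x : PathSpace k N A) (n : ℕ) (e : Edge k N A n) (j : ℕ) :
    Edge k N A j :=
  if h : j < n then x.1 j
  else if h2 : j = n then Edge.cast (congrArg (fun m : ℕ => (m : Fin k)) h2.symm) e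
  else brEdge hrow (n + 1) e.src j (by omega)

lemma brFun_lt {x : PathSpace k N A} {n : ℕ} {e : Edge k N A n} {j : ℕ} (h : j < n) :
    brFun hrow x n e j = x.1 j := dif_pos h

lemma brFun_self {x : PathSpace k N A} {n : ℕ} {e : Edge k N A n} :
    brFun hrow x n e n = e := by
  rw [brFun, dif_neg (lt_irrefl n), dif_pos rfl]
  cases e
  rfl

lemma brFun_gt {x : PathSpace k N A} {n : ℕ} {e : Edge k N A n} {j : ℕ} (h : n < j) :
    brFun hrow x n e j = brEdge hrow (n + 1) e.src j (by omega) := by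
  rw [brFun, dif_neg (by omega), dif_neg (by omega)]

lemma brFun_compat {x : PathSpace k N A} {n : ℕ} {e : Edge k N A n}
    (he : e.rg = (x.1 n).rg) (j : ℕ) :
    (brFun hrow x n e j).src = (brFun hrow x n e (j + 1)).rg := by
  rcases lt_trichotomy (j + 1) n with h | h | h
  · rw [brFun_lt hrow (by omega), brFun_lt hrow h]
    exact x.2 j
  · subst h
    rw [brFun_lt hrow (by omega), brFun_self hrow]
    show (x.1 j).src = e.rg
    rw [he]
    exact x.2 j
  · rcases Nat.eq_or_lt_of_le (Nat.lt_succ_iff.mp h) with h2 | h2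
    · subst h2
      rw [brFun_self hrow, brFun_gt hrow (by omega : n < n + 1)]
      show e.src = walkV hrow (n + 1) e.src (n + 1 - (n + 1))
      rw [Nat.sub_self]
      rfl
    · rw [brFun_gt hrow h2, brFun_gt hrow (by omega)]
      show walkV hrow (n + 1) e.src (j - (n + 1) + 1)
          = walkV hrow (n + 1) e.src (j + 1 - (n + 1))
      congr 1
      omega

/-- The branch of `x` at level `n` through the edge `e`. -/
noncomputable def branch (x : PathSpace k N A) (n : ℕ) (e : Edge k N A n)
    (he : e.rg = (x.1 n).rg) : PathSpace k N A :=
  ⟨brFun hrow x n e, brFun_compat hrow he⟩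

lemma branch_mem_cyl {x : PathSpace k N A} {n : ℕ} {e : Edge k N A n}
    (he : e.rg = (x.1 n).rg) {l : ℕ} (hl : l ≤ n) :
    branch hrow x n e he ∈ Cyl (prefixPath x l) := by
  constructor
  · show (brFun hrow x n e 0).rg = (x.1 0).rg
    rcases Nat.eq_zero_or_pos n with h0 | h0
    · subst h0
      rw [brFun_self hrow]
      exact he
    · rw [brFun_lt hrow h0]
  · intro i
    show brFun hrow x n e i = x.1 i
    exact brFun_lt hrow (lt_of_lt_of_le i.isLt hl)

lemma branch_ne {x : PathSpace k N A} {n : ℕ} {e : Edge k N A n}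
    (he : e.rg = (x.1 n).rg) (hne : e ≠ x.1 n) :
    branch hrow x n e he ≠ x := by
  intro h
  apply hne
  have h2 := congrArg (fun z : PathSpace k N A => z.1 n) h
  simpa [branch, brFun_self hrow] using h2

end Walk

section NhdsBasis

lemma cyl_prefix_antitone (x : PathSpace k N A) {l l' : ℕ} (h : l ≤ l') :
    Cyl (prefixPath x l') ⊆ Cyl (prefixPath x l) := by
  rintro y ⟨h0, hi⟩
  exact ⟨h0, fun i => hi (Fin.castLE h i)⟩

lemma exists_prefix_subset {x : PathSpace k N A} {U : Set (PathSpace k N A)}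
    (hU : U ∈ 𝓝 x) : ∃ l, Cyl (prefixPath x l) ⊆ U := by
  obtain ⟨V, hVU, hV, hxV⟩ := mem_nhds_iff.1 hU
  suffices H : ∀ V : Set (PathSpace k N A),
      TopologicalSpace.GenerateOpen (cylinderSets k N A) V → x ∈ V →
        ∃ l, Cyl (prefixPath x l) ⊆ V by
    obtain ⟨l, hl⟩ := H V hV hxV
    exact ⟨l, hl.trans hVU⟩
  clear hVU hV hxV V
  intro V hV
  induction hV with
  | basic s hs =>
    intro hx
    obtain ⟨l, lam, rfl⟩ := hs
    refine ⟨l, fun y hy => ?_⟩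
    exact ⟨hy.1.trans hx.1, fun i => (hy.2 i).trans (hx.2 i)⟩
  | univ => exact fun _ => ⟨0, Set.subset_univ _⟩
  | inter s t _ _ ihs iht =>
    intro hx
    obtain ⟨l1, h1⟩ := ihs hx.1
    obtain ⟨l2, h2⟩ := iht hx.2
    exact ⟨max l1 l2, Set.subset_inter
      ((cyl_prefix_antitone x (le_max_left l1 l2)).trans h1)
      ((cyl_prefix_antitone x (le_max_right l1 l2)).trans h2)⟩
  | sUnion S _ ih =>
    rintro ⟨s, hsS, hxs⟩
    obtain ⟨l, hl⟩ := ih s hsS hxs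
    exact ⟨l, hl.trans (Set.subset_sUnion_of_mem hsS)⟩

end NhdsBasis

section MatrixComb

variable (A) in
/-- The product `A 0 ^ e 0 * ⋯ * A (k-1) ^ e (k-1)`. -/
def Pmat (e : Fin k → ℕ) : Matrix (Fin N) (Fin N) ℕ :=
  ((List.finRange k).map (fun i => A i ^ e i)).prod

/-- Row sum of a matrix. -/
def rsum (M : Matrix (Fin N) (Fin N) ℕ) (a : Fin N) : ℕ := ∑ b, M a b

lemma rsum_one (a : Fin N) : rsum (1 : Matrix (Fin N) (Fin N) ℕ) a = 1 := by
  simp [rsum, Matrix.one_apply]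

lemma rsum_mul (M M' : Matrix (Fin N) (Fin N) ℕ) (a : Fin N) :
    rsum (M * M') a = ∑ c, M a c * rsum M' c := by
  simp only [rsum, Matrix.mul_apply, Finset.mul_sum]
  exact Finset.sum_comm

lemma one_le_rsum_mul {M M' : Matrix (Fin N) (Fin N) ℕ}
    (hM : ∀ a, 1 ≤ rsum M a) (hM' : ∀ a, 1 ≤ rsum M' a) (a : Fin N) :
    1 ≤ rsum (M * M') a := by
  rw [rsum_mul]
  calc 1 ≤ rsum M a := hM a
  _ = ∑ c, M a c := rfl
  _ ≤ ∑ c, M a c * rsum M' c :=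
    Finset.sum_le_sum fun c _ => Nat.le_mul_of_pos_right _ (hM' c)

lemma one_le_rsum_list {l : List (Matrix (Fin N) (Fin N) ℕ)}
    (h : ∀ M ∈ l, ∀ a, 1 ≤ rsum M a) : ∀ a, 1 ≤ rsum l.prod a := by
  induction l with
  | nil => intro a; rw [List.prod_nil, rsum_one]
  | cons M t ih =>
    intro a
    rw [List.prod_cons]
    exact one_le_rsum_mul (h M (List.mem_cons_self))
      (ih (fun M' hM' => h M' (List.mem_cons_of_mem M hM'))) a

variable (hcomm : ∀ i j, A i * A j = A j * A i)
variable (hrow : ∀ (i : Fin k) (a : Fin N), ∃ b, 0 < A i a b)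

lemma one_le_rsum_A (hrow : ∀ (i : Fin k) (a : Fin N), ∃ b, 0 < A i a b) (i : Fin k)
    (a : Fin N) : 1 ≤ rsum (A i) a := by
  obtain ⟨b, hb⟩ := hrow i a
  calc 1 ≤ A i a b := hb
  _ ≤ rsum (A i) a := Finset.single_le_sum (fun c _ => Nat.zero_le _) (Finset.mem_univ b)

include hrow in
lemma one_le_rsum_Pmat (e : Fin k → ℕ) (a : Fin N) : 1 ≤ rsum (Pmat A e) a := by
  refine one_le_rsum_list (fun M hM => ?_) a
  simp only [List.mem_map] at hM
  obtain ⟨i, -, rfl⟩ := hM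
  induction e i with
  | zero => intro a; rw [pow_zero, rsum_one]
  | succ m ih =>
    intro a
    rw [pow_succ]
    exact one_le_rsum_mul ih (one_le_rsum_A hrow i) a

lemma list_prod_map_mul {M : Type*} [Monoid M] {ι : Type*} (l : List ι) (f g : ι → M)
    (h : ∀ i j, Commute (f i) (g j)) :
    (l.map (fun i => f i * g i)).prod = (l.map f).prod * (l.map g).prod := by
  induction l with
  | nil => simp
  | cons a t ih =>
    simp only [List.map_cons, List.prod_cons, ih]
    have hc : Commute (g a) ((t.map f).prod) :=
      Commute.list_prod_right _ _ (by
        intro x hx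
        simp only [List.mem_map] at hx
        obtain ⟨i, -, rfl⟩ := hx
        exact (h i a).symm)
    rw [mul_assoc, ← mul_assoc (g a), hc.eq, mul_assoc, ← mul_assoc]

include hcomm in
lemma Pmat_add (e d : Fin k → ℕ) :
    Pmat A (fun i => e i + d i) = Pmat A e * Pmat A d := by
  unfold Pmat
  rw [← list_prod_map_mul _ _ _ (fun i j => Commute.pow_pow (hcomm i j) _ _)]
  congr 1
  exact List.map_congr_left fun i _ => pow_add _ _ _

lemma list_prod_map_ite {M : Type*} [Monoid M] {ι : Type*} [DecidableEq ι]
    (l : List ι) (a : ι) (f : ι → M) (hnd : l.Nodup) (hm : a ∈ l) :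
    (l.map (fun i => if a = i then f i else 1)).prod = f a := by
  induction l with
  | nil => simp at hm
  | cons b t ih =>
    simp only [List.map_cons, List.prod_cons]
    rcases List.nodup_cons.mp hnd with ⟨hbt, hndt⟩
    by_cases hab : a = b
    · subst hab
      rw [if_pos rfl]
      have : (t.map (fun i => if a = i then f i else 1)).prod = 1 := by
        refine List.prod_eq_one fun x hx => ?_
        simp only [List.mem_map] at hx
        obtain ⟨i, hi, rfl⟩ := hx
        rw [if_neg]
        intro h
        exact hbt (h ▸ hi)
      rw [this, mul_one]
    · rw [if_neg hab, one_mul]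
      exact ih hndt (List.mem_of_ne_of_mem hab hm)

lemma Pmat_single (i : Fin k) :
    Pmat A (fun j => if i = j then 1 else 0) = A i := by
  unfold Pmat
  have h : (List.finRange k).map (fun j => A j ^ (if i = j then 1 else 0))
      = (List.finRange k).map (fun j => if i = j then A j else 1) := by
    refine List.map_congr_left fun j _ => ?_
    by_cases h : i = j <;> simp [h]
  rw [h]
  exact list_prod_map_ite _ i A (List.nodup_finRange k) (List.mem_finRange i)

include hcomm in
lemma list_prod_map_A (l : List (Fin k)) :
    (l.map A).prod = Pmat A (fun i => l.count i) := by
  induction l with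
  | nil =>
    simp only [List.map_nil, List.prod_nil, List.count_nil]
    unfold Pmat
    symm
    refine List.prod_eq_one fun x hx => ?_
    simp only [List.mem_map] at hx
    obtain ⟨i, -, rfl⟩ := hx
    exact pow_zero _
  | cons a t ih =>
    simp only [List.map_cons, List.prod_cons, ih]
    have h1 : (fun i => (a :: t).count i) = fun i => (if a = i then 1 else 0) + t.count i := by
      funext i
      rw [List.count_cons]
      simp only [beq_iff_eq]
      by_cases h : a = i <;> simp [h] <;> omega
    rw [h1, Pmat_add hcomm, Pmat_single]

lemma sum_mul_of_unique {f g : Fin N → ℕ} {c0 : Fin N} (h1 : ∑ c, f c = 1)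
    (h2 : 0 < f c0) : ∑ c, f c * g c = g c0 := by
  have hc0 : f c0 = 1 :=
    le_antisymm (h1 ▸ Finset.single_le_sum (fun c _ => Nat.zero_le _) (Finset.mem_univ c0)) h2
  have hz : ∀ b, b ≠ c0 → f b = 0 := by
    intro b hb
    have he : f c0 + ∑ c ∈ Finset.univ.erase c0, f c = 1 := by
      rw [Finset.add_sum_erase _ f (Finset.mem_univ c0)]; exact h1
    have h3 : ∑ c ∈ Finset.univ.erase c0, f c = 0 := by omega
    exact (Finset.sum_eq_zero_iff.mp h3) b (Finset.mem_erase.mpr ⟨hb, Finset.mem_univ b⟩)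
  rw [Finset.sum_eq_single c0 (fun b _ hb => by rw [hz b hb, zero_mul])
    (fun hmem => absurd (Finset.mem_univ _) hmem), hc0, one_mul]

lemma nat_row_support {f : Fin N → ℕ} (h : ∑ b, f b = 1) :
    ∃ b0, f b0 = 1 ∧ ∀ b, b ≠ b0 → f b = 0 := by
  have hex : ∃ b0, 0 < f b0 := by
    by_contra hc
    push_neg at hc
    simp only [Nat.le_zero] at hc
    rw [Finset.sum_eq_zero (fun b _ => hc b)] at h
    omega
  obtain ⟨b0, hb0⟩ := hex
  have h1 : f b0 = 1 :=
    le_antisymm (h ▸ Finset.single_le_sum (fun b _ => Nat.zero_le _) (Finset.mem_univ b0)) hb0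
  refine ⟨b0, h1, fun b hb => ?_⟩
  have h2 : f b0 + ∑ c ∈ Finset.univ.erase b0, f c = 1 := by
    rw [Finset.add_sum_erase _ f (Finset.mem_univ b0)]; exact h
  have h3 : ∑ c ∈ Finset.univ.erase b0, f c = 0 := by omega
  exact (Finset.sum_eq_zero_iff.mp h3) b (Finset.mem_erase.mpr ⟨hb, Finset.mem_univ b⟩)

include hcomm hrow in
/-- The key combinatorial step: if from some level-`0` vertex `a` the number of paths of
every length `q·k` is `1` (expressed via row sums of `(A 0 ⋯ A (k-1))^q`), then every row
sum of every `A i` equals `1`. -/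
lemma rowsum_eq_one_of_H (hirr : IrreducibleFamily A) {a : Fin N}
    (H : ∀ q : ℕ, rsum (Pmat A (fun _ => q)) a = 1) (i : Fin k) (c : Fin N) :
    rsum (A i) c = 1 := by
  obtain ⟨l, hl⟩ := hirr a c
  set d : Fin k → ℕ := fun i => l.count i with hd
  have hdc : 0 < Pmat A d a c := by rw [← list_prod_map_A hcomm]; exact hl
  set q : ℕ := l.length + 1 with hq
  have hqd : ∀ j, d j ≤ l.length := fun j => List.count_le_length
  have hsplit : Pmat A (fun _ => q) = Pmat A d * Pmat A (fun j => q - d j) := by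
    have hfun : (fun _ : Fin k => q) = fun j => d j + (q - d j) := by
      funext j
      have := hqd j
      omega
    rw [hfun]
    exact Pmat_add hcomm _ _
  have h1 : ∑ c', Pmat A d a c' * rsum (Pmat A (fun j => q - d j)) c' = 1 := by
    rw [← rsum_mul, ← hsplit]; exact H q
  have hge : ∀ c', 1 ≤ rsum (Pmat A (fun j => q - d j)) c' :=
    fun c' => one_le_rsum_Pmat hrow _ c'
  have hterm_le : Pmat A d a c * rsum (Pmat A (fun j => q - d j)) c ≤ 1 :=
    h1 ▸ Finset.single_le_sum (f := fun c' => Pmat A d a c' * rsum (Pmat A (fun j => q - d j)) c')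
      (fun b _ => Nat.zero_le _) (Finset.mem_univ c)
  have hterm_ge : 1 ≤ Pmat A d a c * rsum (Pmat A (fun j => q - d j)) c :=
    Nat.one_le_iff_ne_zero.mpr (Nat.mul_ne_zero (by omega) (by have := hge c; omega))
  have hterm : Pmat A d a c * rsum (Pmat A (fun j => q - d j)) c = 1 :=
    le_antisymm hterm_le hterm_ge
  have hrsc : rsum (Pmat A (fun j => q - d j)) c = 1 := (mul_eq_one.mp hterm).2
  have hsplit2 : Pmat A (fun j => q - d j)
      = A i * Pmat A (fun j => (q - d j) - (if i = j then 1 else 0)) := by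
    have hfun : (fun j : Fin k => q - d j)
        = fun j => (if i = j then 1 else 0) + ((q - d j) - (if i = j then 1 else 0)) := by
      funext j
      have := hqd j
      by_cases h : i = j <;> simp only [h, if_true, if_false] <;> omega
    rw [hfun, Pmat_add hcomm, Pmat_single]
  have h2 : rsum (A i) c ≤ 1 := by
    have h3 := hrsc
    rw [hsplit2, rsum_mul] at h3
    calc rsum (A i) c = ∑ u, A i c u := rfl
    _ ≤ ∑ u, A i c u * rsum (Pmat A fun j => (q - d j) - (if i = j then 1 else 0)) u :=
        Finset.sum_le_sum fun u _ => Nat.le_mul_of_pos_right _ (one_le_rsum_Pmat hrow _ u)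
    _ = 1 := h3
  exact le_antisymm h2 (one_le_rsum_A hrow i c)

end MatrixComb

section CountLemmas

lemma count_cast_range_one (i : Fin k) :
    ((List.range k).map (fun j => ((j : ℕ) : Fin k))).count i = 1 := by
  apply List.count_eq_one_of_mem
  · refine List.Nodup.map_on ?_ (List.nodup_range)
    intro x hx y hy hxy
    rw [List.mem_range] at hx hy
    have hx' : ((x : Fin k) : ℕ) = x := Fin.val_cast_of_lt hx
    have hy' : ((y : Fin k) : ℕ) = y := Fin.val_cast_of_lt hy
    rw [← hx', ← hy', hxy]
  · refine List.mem_map.mpr ⟨i.val, List.mem_range.mpr i.isLt, ?_⟩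
    exact Fin.cast_val_eq_self i

lemma count_cast_range (q : ℕ) (i : Fin k) :
    ((List.range (q * k)).map (fun j => ((j : ℕ) : Fin k))).count i = q := by
  induction q with
  | zero => simp
  | succ q ih =>
    have hq : (q + 1) * k = q * k + k := by ring
    rw [hq, List.range_add, List.map_append, List.count_append, ih]
    have h2 : (List.map (fun x => q * k + x) (List.range k)).map (fun j => ((j : ℕ) : Fin k))
        = (List.range k).map (fun j => ((j : ℕ) : Fin k)) := by
      rw [List.map_map]
      refine List.map_congr_left fun a _ => ?_
      show ((q * k + a : ℕ) : Fin k) = ((a : ℕ) : Fin k)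
      push_cast
      simp [Fin.natCast_self]
    rw [h2, count_cast_range_one]

variable (A) in
/-- The ordered product of the `L` matrices governing levels `n, n+1, …, n+L-1`. -/
def Qprod (n L : ℕ) : Matrix (Fin N) (Fin N) ℕ :=
  ((List.range L).map (fun j => A ((n + j : ℕ) : Fin k))).prod

lemma Qprod_succ (n L : ℕ) :
    Qprod A n (L + 1) = A ((n : ℕ) : Fin k) * Qprod A (n + 1) L := by
  unfold Qprod
  rw [List.range_succ_eq_map, List.map_cons, List.prod_cons, List.map_map]
  congr 2
  refine List.map_congr_left fun a _ => ?_
  show A ((n + (a + 1) : ℕ) : Fin k) = A (((n + 1) + a : ℕ) : Fin k)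
  rw [show n + (a + 1) = (n + 1) + a from by omega]

variable (hcomm : ∀ i j, A i * A j = A j * A i)

include hcomm in
lemma Qprod_eq_Pmat (l q : ℕ) :
    Qprod A (l * k) (q * k) = Pmat A (fun _ => q) := by
  unfold Qprod
  have h1 : (List.range (q * k)).map (fun j => A ((l * k + j : ℕ) : Fin k))
      = (((List.range (q * k)).map (fun j => ((j : ℕ) : Fin k))).map A) := by
    rw [List.map_map]
    refine List.map_congr_left fun a _ => ?_
    show A ((l * k + a : ℕ) : Fin k) = A ((a : ℕ) : Fin k)
    congr 1
    push_cast
    simp [Fin.natCast_self]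
  rw [h1, list_prod_map_A hcomm]
  have hfun : (fun i : Fin k => ((List.range (q * k)).map (fun j => ((j : ℕ) : Fin k))).count i)
      = fun _ : Fin k => q := by
    funext i
    exact count_cast_range q i
  rw [hfun]

end CountLemmas

section Unique

lemma rowsum_one_of_unique_edge {n : ℕ} {x : PathSpace k N A}
    (hu : ∀ e : Edge k N A n, e.rg = (x.1 n).rg → e = x.1 n) :
    rsum (A ((n : ℕ) : Fin k)) ((x.1 n).rg) = 1 := by
  have hpos : 0 < A ((n : ℕ) : Fin k) ((x.1 n).rg) ((x.1 n).src) := (x.1 n).idx.pos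
  have hzero : ∀ b, b ≠ (x.1 n).src → A ((n : ℕ) : Fin k) ((x.1 n).rg) b = 0 := by
    intro b hb
    by_contra hA
    have hA' : 0 < A ((n : ℕ) : Fin k) ((x.1 n).rg) b := Nat.pos_of_ne_zero hA
    have h := hu ⟨(x.1 n).rg, b, ⟨0, hA'⟩⟩ rfl
    exact hb (congrArg Edge.src h)
  have hle : A ((n : ℕ) : Fin k) ((x.1 n).rg) ((x.1 n).src) ≤ 1 := by
    by_contra hA
    push_neg at hA
    have h0 := hu ⟨(x.1 n).rg, (x.1 n).src, ⟨0, by omega⟩⟩ rfl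
    have h1 := hu ⟨(x.1 n).rg, (x.1 n).src, ⟨1, by omega⟩⟩ rfl
    have h01 := h0.trans h1.symm
    have h2 := congrArg (fun e : Edge k N A n => (e.idx : ℕ)) h01
    simp at h2
  unfold rsum
  rw [Finset.sum_eq_single ((x.1 n).src) (fun b _ hb => hzero b hb)
    (fun hmem => absurd (Finset.mem_univ _) hmem)]
  omega

lemma rsum_Qprod_eq_one {x : PathSpace k N A} {l : ℕ}
    (hu : ∀ n, l ≤ n → ∀ e : Edge k N A n, e.rg = (x.1 n).rg → e = x.1 n) :
    ∀ L n, l ≤ n → rsum (Qprod A n L) ((x.1 n).rg) = 1 := by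
  intro L
  induction L with
  | zero =>
    intro n _
    unfold Qprod
    simp only [List.range_zero, List.map_nil, List.prod_nil]
    exact rsum_one _
  | succ L ih =>
    intro n hn
    rw [Qprod_succ, rsum_mul]
    have hone := rowsum_one_of_unique_edge (hu n hn)
    have hpos : 0 < A ((n : ℕ) : Fin k) ((x.1 n).rg) ((x.1 n).src) := (x.1 n).idx.pos
    rw [sum_mul_of_unique hone hpos]
    have hsrc : (x.1 n).src = (x.1 (n + 1)).rg := x.2 n
    rw [hsrc]
    exact ih (n + 1) (by omega)

end Unique

section SpecRadBound

lemma specRad_le_one [NeZero N] {M : Matrix (Fin N) (Fin N) ℕ}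
    (h : ∀ a, ∑ b, M a b = 1) : specRad M ≤ 1 := by
  haveI : Nonempty (Fin N) := ⟨⟨0, Nat.pos_of_ne_zero (NeZero.ne N)⟩⟩
  set F := M.map (Nat.cast : ℕ → ℂ) with hF
  have hsp : spectralRadius ℂ F ≤ 1 := by
    unfold spectralRadius
    refine iSup₂_le fun μ hμ => ?_
    rw [spectrum.mem_iff] at hμ
    have hdet : (algebraMap ℂ (Matrix (Fin N) (Fin N) ℂ) μ - F).det = 0 := by
      by_contra hne
      exact hμ ((Matrix.isUnit_iff_isUnit_det _).mpr (isUnit_iff_ne_zero.mpr hne))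
    obtain ⟨v, hv0, hv⟩ := (Matrix.exists_mulVec_eq_zero_iff).mpr hdet
    have hFv : F.mulVec v = μ • v := by
      have h1 : (algebraMap ℂ (Matrix (Fin N) (Fin N) ℂ) μ).mulVec v = μ • v := by
        rw [Algebra.algebraMap_eq_smul_one, Matrix.smul_mulVec, Matrix.one_mulVec]
      have h2 := hv
      rw [Matrix.sub_mulVec, h1] at h2
      exact (sub_eq_zero.mp h2).symm
    choose f hf1 hf0 using fun c => nat_row_support (h c)
    have hFv' : ∀ c, F.mulVec v c = v (f c) := by
      intro c
      have hsum : F.mulVec v c = ∑ b, (M c b : ℂ) * v b := by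
        simp [Matrix.mulVec, dotProduct, hF, Matrix.map_apply]
      rw [hsum, Finset.sum_eq_single (f c)
        (fun b _ hb => by rw [hf0 c b hb]; simp)
        (fun hmem => absurd (Finset.mem_univ _) hmem), hf1 c]
      simp
    obtain ⟨c0, -, hc0⟩ := Finset.exists_max_image Finset.univ (fun c => ‖v c‖)
      Finset.univ_nonempty
    have hvc0 : 0 < ‖v c0‖ := by
      rcases Function.ne_iff.mp hv0 with ⟨c, hc⟩
      calc 0 < ‖v c‖ := norm_pos_iff.mpr hc
      _ ≤ ‖v c0‖ := hc0 c (Finset.mem_univ c)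
    have hstep : ‖μ‖ * ‖v c0‖ ≤ ‖v c0‖ := by
      have heq := congrFun hFv c0
      rw [hFv' c0] at heq
      have habs : ‖v (f c0)‖ = ‖μ‖ * ‖v c0‖ := by
        rw [heq]
        simp [norm_smul]
      calc ‖μ‖ * ‖v c0‖ = ‖v (f c0)‖ := habs.symm
      _ ≤ ‖v c0‖ := hc0 (f c0) (Finset.mem_univ _)
    have hμ1 : ‖μ‖ ≤ 1 := by
      by_contra hgt
      push_neg at hgt
      nlinarith
    show (‖μ‖₊ : ℝ≥0∞) ≤ 1
    rw [← ENNReal.coe_one, ENNReal.coe_le_coe, ← NNReal.coe_le_coe]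
    simpa using hμ1
  have h2 := ENNReal.toReal_mono (by norm_num) hsp
  simpa [specRad] using h2

end SpecRadBound

end Aux

/-- If `A 1, …, A k` are pairwise commuting `N×N` matrices with
nonnegative integer entries and no zero rows which form an irreducible family, and the
product of their spectral radii exceeds `1`, then the infinite path space of the
stationary `k`-Bratteli diagram of the `A i` is a Cantor set: nonempty, compact,
Hausdorff, totally disconnected, metrizable, with no isolated points. -/
theorem statement2 (k N : ℕ) [NeZero k] [NeZero N]
    (A : Fin k → Matrix (Fin N) (Fin N) ℕ)
    (hcomm : ∀ i j, A i * A j = A j * A i)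
    (hrow : ∀ (i : Fin k) (a : Fin N), ∃ b, 0 < A i a b)
    (hirr : IrreducibleFamily A)
    (hspec : 1 < ∏ i : Fin k, specRad (A i)) :
    Nonempty (PathSpace k N A) ∧
    CompactSpace (PathSpace k N A) ∧
    T2Space (PathSpace k N A) ∧
    TotallyDisconnectedSpace (PathSpace k N A) ∧
    TopologicalSpace.MetrizableSpace (PathSpace k N A) ∧
    Perfect (Set.univ : Set (PathSpace k N A)) := by
  have a0 : Fin N := ⟨0, Nat.pos_of_ne_zero (NeZero.ne N)⟩
  refine ⟨pathSpace_nonempty hrow a0, pathSpace_compactSpace, pathSpace_t2Space,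
    pathSpace_totallyDisconnected, pathSpace_metrizable, isClosed_univ, ?_⟩
  rw [preperfect_iff_nhds]
  intro x _ U hU
  obtain ⟨l, hl⟩ := exists_prefix_subset hU
  by_cases hb : ∃ n, l ≤ n ∧ ∃ e : Edge k N A n, e.rg = (x.1 n).rg ∧ e ≠ x.1 n
  · obtain ⟨n, hn, e, he, hne⟩ := hb
    exact ⟨branch hrow x n e he, ⟨hl (branch_mem_cyl hrow he hn), Set.mem_univ _⟩,
      branch_ne hrow he hne⟩
  · exfalso
    push_neg at hb
    have hu : ∀ n, l ≤ n → ∀ e : Edge k N A n, e.rg = (x.1 n).rg → e = x.1 n := hb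
    have hk : 0 < k := Nat.pos_of_ne_zero (NeZero.ne k)
    have hlk : l ≤ l * k := Nat.le_mul_of_pos_right l hk
    have H : ∀ q : ℕ, rsum (Pmat A (fun _ => q)) ((x.1 (l * k)).rg) = 1 := by
      intro q
      rw [← Qprod_eq_Pmat hcomm l q]
      exact rsum_Qprod_eq_one (fun n hn => hu n hn) (q * k) (l * k) hlk
    have hones : ∀ (i : Fin k) (c : Fin N), rsum (A i) c = 1 :=
      rowsum_eq_one_of_H hcomm hrow hirr H
    have hle : ∀ i : Fin k, specRad (A i) ≤ 1 := fun i =>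
      specRad_le_one (fun a => hones i a)
    have hprod : ∏ i : Fin k, specRad (A i) ≤ 1 :=
      Finset.prod_le_one (fun i _ => ENNReal.toReal_nonneg) (fun i _ => hle i)
    linarith

end KBratteli
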